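/- Let d, ℓ be positive integers and q = d + 1, let F be a field with |F| ≥ q, and let C ⊆ F^q be the set of q Vandermonde vectors (1, α_i, ..., α_i^{q−1})ᵀ for distinct α₁,...,α_q ∈ F; let a ∈ F^q be the sum of all vectors in C. Define p : F^{q×(dℓ)} → F mapping M = (M₁,...,M_ℓ), each M_i ∈ F^{q×d}, to p_{q,d}(M₁) · ∏_{i=2}^{ℓ} p_{q,q}(M_i, a − y), where y is the sum of the columns of M₁, and p_{q,t}(N) for N ∈ F^{q×t} denotes the determinant of the top t×t submatrix of N with its first row replaced by ones. Then p is a polynomial of degree at most dℓ − 1, and (C, p) captures the (d, ℓ, d+1)-uniformly rainbow property: for every C-colored M, p(M) ≠ 0 iff the ℓ column sets of M₁,...,M_ℓ are equal and of size d. -/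
import Mathlib

open MvPolynomial Matrix Finset

lemma stmt10_totalDegree_det_le {σ R : Type*} [CommRing R] {n : Type*} [Fintype n] [DecidableEq n]
    (A : Matrix n n (MvPolynomial σ R)) (c : n → ℕ) (h : ∀ i j, (A i j).totalDegree ≤ c i) :
    A.det.totalDegree ≤ ∑ i, c i := by
  rw [Matrix.det_apply]
  refine totalDegree_finsetSum_le fun σ' _ => ?_
  refine (totalDegree_smul_le _ _).trans ?_
  refine (totalDegree_finset_prod _ _).trans ?_
  calc ∑ i, (A (σ' i) i).totalDegree ≤ ∑ i, c (σ' i) := Finset.sum_le_sum fun i _ => h _ _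
    _ = ∑ i, c i := Equiv.sum_comp σ' c

lemma stmt10_sum_if_eq {n : Type*} [Fintype n] [DecidableEq n] (z : n) :
    ∑ a : n, (if a = z then 0 else 1) = Fintype.card n - 1 := by
  rw [← Finset.sum_erase_add _ _ (Finset.mem_univ z), if_pos rfl, add_zero,
    Finset.sum_ite_of_false (fun a ha => Finset.ne_of_mem_erase ha), Finset.sum_const,
    Finset.card_erase_of_mem (Finset.mem_univ z), Finset.card_univ, smul_eq_mul, mul_one]

theorem stmt10 {F : Type*} [Field F] [DecidableEq F] (d l : ℕ) (hd : 0 < d) (hl : 0 < l)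
    (α : Fin (d + 1) → F) (hα : Function.Injective α) :
    let i0 : Fin l := ⟨0, hl⟩
    let aC : Fin (d + 1) → MvPolynomial (Fin l × Fin (d + 1) × Fin d) F :=
      fun rr => MvPolynomial.C (∑ s : Fin (d + 1), α s ^ (rr : ℕ))
    let y : Fin (d + 1) → MvPolynomial (Fin l × Fin (d + 1) × Fin d) F :=
      fun rr => ∑ j : Fin d, MvPolynomial.X (i0, rr, j)
    let P : MvPolynomial (Fin l × Fin (d + 1) × Fin d) F :=
      Matrix.det (Matrix.updateRow
        (Matrix.of fun a b : Fin d => MvPolynomial.X (i0, Fin.castSucc a, b)) ⟨0, hd⟩ 1) *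
      ∏ i ∈ Finset.univ.filter (fun i : Fin l => i ≠ i0),
        Matrix.det (Matrix.updateRow
          (Matrix.of fun rr c : Fin (d + 1) =>
            if h : (c : ℕ) < d then MvPolynomial.X (i, rr, ⟨c, h⟩) else aC rr - y rr)
          0 1)
    P.totalDegree ≤ d * l - 1 ∧
    ∀ M : Fin l → Matrix (Fin (d + 1)) (Fin d) F,
      (∀ i j, ∃ s, ∀ k, M i k j = α s ^ (k : ℕ)) →
      (MvPolynomial.eval (fun t => M t.1 t.2.1 t.2.2) P ≠ 0 ↔
        (∀ i, Function.Injective fun j => fun k => M i k j) ∧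
        ∀ i i', (Finset.univ.image fun j => fun k : Fin (d + 1) => M i k j) =
          Finset.univ.image fun j => fun k => M i' k j) := by
  intro i0 aC y P
  constructor
  · -- degree bound
    have hA : (Matrix.det (Matrix.updateRow
        (Matrix.of fun a b : Fin d => MvPolynomial.X (i0, Fin.castSucc a, b))
        ⟨0, hd⟩ (1 : Fin d → MvPolynomial (Fin l × Fin (d + 1) × Fin d) F))).totalDegree
        ≤ d - 1 := by
      refine le_trans (stmt10_totalDegree_det_le _
        (fun a => if a = (⟨0, hd⟩ : Fin d) then 0 else 1) ?_) ?_
      · intro a b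
        rw [Matrix.updateRow_apply]
        rcases eq_or_ne a (⟨0, hd⟩ : Fin d) with h | h
        · simp [h]
        · simp [h, MvPolynomial.totalDegree_X]
      · rw [stmt10_sum_if_eq]
        simp
    have hB : (∏ i ∈ Finset.univ.filter (fun i : Fin l => i ≠ i0),
        Matrix.det (Matrix.updateRow
          (Matrix.of fun rr c : Fin (d + 1) =>
            if h : (c : ℕ) < d then MvPolynomial.X (i, rr, ⟨c, h⟩) else aC rr - y rr)
          0 1)).totalDegree ≤ d * (l - 1) := by
      refine le_trans (totalDegree_finset_prod _ _) ?_
      have hcard : (Finset.univ.filter (fun i : Fin l => i ≠ i0)).card = l - 1 := by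
        rw [Finset.filter_ne', Finset.card_erase_of_mem (Finset.mem_univ _),
          Finset.card_univ, Fintype.card_fin]
      calc ∑ i ∈ Finset.univ.filter (fun i : Fin l => i ≠ i0), _ ≤
          ∑ _i ∈ Finset.univ.filter (fun i : Fin l => i ≠ i0), d := by
            refine Finset.sum_le_sum fun i _ => ?_
            refine le_trans (stmt10_totalDegree_det_le _
              (fun rr => if rr = (0 : Fin (d+1)) then 0 else 1) ?_) ?_
            · intro rr c
              rw [Matrix.updateRow_apply]
              rcases eq_or_ne rr (0 : Fin (d + 1)) with h | h
              · simp [h]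
              · simp only [if_neg h, Matrix.of_apply]
                split
                · simp [MvPolynomial.totalDegree_X]
                · refine le_trans (MvPolynomial.totalDegree_sub _ _) (max_le ?_ ?_)
                  · simp only [aC, MvPolynomial.totalDegree_C]
                    exact Nat.zero_le 1
                  · simp only [y]
                    exact totalDegree_finsetSum_le fun j _ =>
                      le_of_eq (MvPolynomial.totalDegree_X _)
            · rw [stmt10_sum_if_eq]
              simp
        _ = d * (l - 1) := by rw [Finset.sum_const, hcard, smul_eq_mul, mul_comm]
    calc P.totalDegree ≤ _ + _ := totalDegree_mul _ _
      _ ≤ (d - 1) + d * (l - 1) := add_le_add hA hB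
      _ ≤ d * l - 1 := by
          obtain ⟨m, rfl⟩ : ∃ m, l = m + 1 := ⟨l - 1, by omega⟩
          have h1 : d * (m + 1) = d * m + d := by ring
          have h2 : (m + 1) - 1 = m := rfl
          rw [h1, h2]
          omega
  · intro M hM
    choose s hs using hM
    set e := MvPolynomial.eval (fun t : Fin l × Fin (d + 1) × Fin d => M t.1 t.2.1 t.2.2)
      with he
    have hcomp : ∀ {n : ℕ} (f : Fin n → Fin (d + 1)),
        Function.Injective (fun x => α (f x)) ↔ Function.Injective f :=
      fun f => ⟨fun h a b hab => h (congrArg α hab), fun h => hα.comp h⟩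
    have hcol : ∀ i, (fun j => fun k : Fin (d + 1) => M i k j)
        = fun j => fun k : Fin (d + 1) => α (s i j) ^ (k : ℕ) :=
      fun i => funext fun j => funext fun k => hs i j k
    have hginj : Function.Injective (fun u => fun k : Fin (d + 1) => α u ^ (k : ℕ)) := by
      intro u v huv
      have h1 := congrFun huv ⟨1, by omega⟩
      simp only [pow_one] at h1
      exact hα h1
    have hRinj : ∀ i, (Function.Injective fun j => fun k : Fin (d + 1) => M i k j)
        ↔ Function.Injective (s i) := by
      intro i
      rw [hcol i]
      exact ⟨fun h a b hab =>
        h (congrArg (fun u => fun k : Fin (d + 1) => α u ^ (k : ℕ)) hab),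
        fun h => hginj.comp h⟩
    have hRimg : ∀ i i' : Fin l,
        ((Finset.univ.image fun j => fun k : Fin (d + 1) => M i k j)
          = Finset.univ.image fun j => fun k : Fin (d + 1) => M i' k j)
        ↔ Finset.univ.image (s i) = Finset.univ.image (s i') := by
      intro i i'
      have e1 : ∀ f : Fin d → Fin (d + 1),
          (Finset.univ.image fun j => fun k : Fin (d + 1) => α (f j) ^ (k : ℕ))
          = (Finset.univ.image f).image (fun u => fun k : Fin (d + 1) => α u ^ (k : ℕ)) := by
        intro f
        rw [Finset.image_image]
        rfl
      rw [hcol i, hcol i', e1, e1]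
      exact Finset.image_inj hginj
    have h1 : e (Matrix.det (Matrix.updateRow
        (Matrix.of fun a b : Fin d => MvPolynomial.X (i0, Fin.castSucc a, b)) ⟨0, hd⟩ 1))
        = (Matrix.vandermonde fun b => α (s i0 b)).det := by
      rw [RingHom.map_det, RingHom.mapMatrix_apply]
      have hmat : (Matrix.updateRow
          (Matrix.of fun a b : Fin d => MvPolynomial.X (i0, Fin.castSucc a, b)) ⟨0, hd⟩
            (1 : Fin d → MvPolynomial (Fin l × Fin (d + 1) × Fin d) F)).map e
          = (Matrix.vandermonde fun b => α (s i0 b))ᵀ := by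
        ext a b
        rw [Matrix.map_apply, Matrix.updateRow_apply, Matrix.transpose_apply,
          Matrix.vandermonde_apply]
        rcases eq_or_ne a (⟨0, hd⟩ : Fin d) with ha | ha
        · rw [if_pos ha, ha]
          simp
        · rw [if_neg ha, Matrix.of_apply, he]
          simp only [MvPolynomial.eval_X]
          rw [hs]
          simp
      rw [hmat, Matrix.det_transpose]
    by_cases hinj0 : Function.Injective (s i0)
    · -- main case
      have hd1 : (Matrix.vandermonde fun b => α (s i0 b)).det ≠ 0 :=
        Matrix.det_vandermonde_ne_zero_iff.mpr ((hcomp _).mpr hinj0)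
      have hcard1 : (Finset.univ \ Finset.univ.image (s i0)).card = 1 := by
        rw [Finset.card_sdiff_of_subset (Finset.subset_univ _), Finset.card_univ,
          Finset.card_image_of_injective _ hinj0, Finset.card_univ]
        simp
      obtain ⟨sm, hsm⟩ := Finset.card_eq_one.mp hcard1
      have hsmnot : sm ∉ Finset.univ.image (s i0) := by
        have h2 : sm ∈ Finset.univ \ Finset.univ.image (s i0) := by
          rw [hsm]; exact Finset.mem_singleton_self _
        exact (Finset.mem_sdiff.mp h2).2
      have himg0 : Finset.univ \ {sm} = Finset.univ.image (s i0) := by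
        rw [← hsm, Finset.sdiff_sdiff_self_left, Finset.univ_inter]
      have hay : ∀ rr : Fin (d + 1),
          (∑ u : Fin (d + 1), α u ^ (rr : ℕ)) - (∑ j : Fin d, α (s i0 j) ^ (rr : ℕ))
          = α sm ^ (rr : ℕ) := by
        intro rr
        have h2 : ∑ j : Fin d, α (s i0 j) ^ (rr : ℕ)
            = ∑ u ∈ Finset.univ.image (s i0), α u ^ (rr : ℕ) :=
          (Finset.sum_image (f := fun u => α u ^ (rr : ℕ))
            fun a _ b _ hab => hinj0 hab).symm
        rw [h2, ← Finset.sum_sdiff (Finset.subset_univ (Finset.univ.image (s i0))), hsm,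
          Finset.sum_singleton, add_sub_cancel_right]
      set t : Fin l → Fin (d + 1) → Fin (d + 1) :=
        fun i c => if h : (c : ℕ) < d then s i ⟨c, h⟩ else sm with htdef
      have htc : ∀ i (j : Fin d), t i (Fin.castSucc j) = s i j := by
        intro i j
        have hj : ((Fin.castSucc j : Fin (d + 1)) : ℕ) < d := j.isLt
        simp only [htdef]
        rw [dif_pos hj]
        exact congrArg (s i) (Fin.ext (by simp))
      have htl : ∀ i, t i (Fin.last d) = sm := by
        intro i
        simp only [htdef]
        rw [dif_neg (by simp [Fin.val_last])]
      have hB : ∀ i ∈ Finset.univ.filter (fun i : Fin l => i ≠ i0),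
          e (Matrix.det (Matrix.updateRow (Matrix.of fun rr c : Fin (d + 1) =>
              if h : (c : ℕ) < d then MvPolynomial.X (i, rr, ⟨c, h⟩) else aC rr - y rr) 0 1))
          = (Matrix.vandermonde fun c => α (t i c)).det := by
        intro i _
        rw [RingHom.map_det, RingHom.mapMatrix_apply]
        have hmat : (Matrix.updateRow (Matrix.of fun rr c : Fin (d + 1) =>
            if h : (c : ℕ) < d then MvPolynomial.X (i, rr, ⟨c, h⟩) else aC rr - y rr) 0
              (1 : Fin (d + 1) → MvPolynomial (Fin l × Fin (d + 1) × Fin d) F)).map e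
            = (Matrix.vandermonde fun c => α (t i c))ᵀ := by
          ext rr c
          rw [Matrix.map_apply, Matrix.updateRow_apply, Matrix.transpose_apply,
            Matrix.vandermonde_apply]
          rcases eq_or_ne rr (0 : Fin (d + 1)) with h0 | h0
          · rw [if_pos h0, h0]
            simp
          · rw [if_neg h0, Matrix.of_apply]
            by_cases hc : (c : ℕ) < d
            · rw [dif_pos hc, he]
              simp only [MvPolynomial.eval_X]
              rw [hs]
              congr 2
              simp only [htdef]
              rw [dif_pos hc]
            · rw [dif_neg hc, he]
              simp only [_root_.map_sub, aC, y, MvPolynomial.eval_C, _root_.map_sum, MvPolynomial.eval_X]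
              have hsum : ∑ j : Fin d, M i0 rr j = ∑ j : Fin d, α (s i0 j) ^ (rr : ℕ) :=
                Finset.sum_congr rfl fun j _ => hs i0 j rr
              rw [hsum, hay rr]
              congr 2
              simp only [htdef]
              rw [dif_neg hc]
        rw [hmat, Matrix.det_transpose]
      have hL : e P ≠ 0 ↔ ∀ i, i ≠ i0 → Function.Injective (t i) := by
        have hPe : e P = (Matrix.vandermonde fun b => α (s i0 b)).det *
            ∏ i ∈ Finset.univ.filter (fun i : Fin l => i ≠ i0),
              (Matrix.vandermonde fun c => α (t i c)).det := by
          simp only [P]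
          rw [_root_.map_mul, h1, _root_.map_prod]
          exact congrArg _ (Finset.prod_congr rfl hB)
        rw [hPe, mul_ne_zero_iff, Finset.prod_ne_zero_iff]
        constructor
        · rintro ⟨-, h2⟩ i hi
          exact (hcomp _).mp (Matrix.det_vandermonde_ne_zero_iff.mp
            (h2 i (Finset.mem_filter.mpr ⟨Finset.mem_univ _, hi⟩)))
        · intro h2
          exact ⟨hd1, fun i hi => Matrix.det_vandermonde_ne_zero_iff.mpr
            ((hcomp _).mpr (h2 i (Finset.mem_filter.mp hi).2))⟩
      have key : (∀ i, i ≠ i0 → Function.Injective (t i)) ↔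
          ((∀ i, Function.Injective (s i)) ∧
            ∀ i i', Finset.univ.image (s i) = Finset.univ.image (s i')) := by
        constructor
        · intro h
          have hinj : ∀ i, Function.Injective (s i) := by
            intro i
            rcases eq_or_ne i i0 with rfl | hi
            · exact hinj0
            · intro a b hab
              exact Fin.castSucc_injective d (h i hi (by rw [htc, htc, hab]))
          have himg : ∀ i, Finset.univ.image (s i) = Finset.univ.image (s i0) := by
            intro i
            rcases eq_or_ne i i0 with rfl | hi
            · rfl
            · have hnot : sm ∉ Finset.univ.image (s i) := by
                intro hmem
                obtain ⟨j, -, hj⟩ := Finset.mem_image.mp hmem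
                have h2 : Fin.castSucc j = Fin.last d := h i hi (by rw [htc, htl, hj])
                have h3 := congrArg Fin.val h2
                rw [Fin.coe_castSucc, Fin.val_last] at h3
                have := j.isLt
                omega
              have hsub : Finset.univ.image (s i) ⊆ Finset.univ.image (s i0) := by
                rw [← himg0]
                intro u hu
                rw [Finset.mem_sdiff, Finset.mem_singleton]
                refine ⟨Finset.mem_univ _, ?_⟩
                rintro rfl
                exact hnot hu
              refine Finset.eq_of_subset_of_card_le hsub ?_
              rw [Finset.card_image_of_injective _ (hinj i),
                Finset.card_image_of_injective _ hinj0]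
          exact ⟨hinj, fun i i' => (himg i).trans (himg i').symm⟩
        · rintro ⟨hinj, himg⟩ i hi
          have hnot : sm ∉ Finset.univ.image (s i) := by rw [himg i i0]; exact hsmnot
          intro c c' hcc
          by_cases hc1 : (c : ℕ) < d <;> by_cases hc2 : (c' : ℕ) < d
          · simp only [htdef, dif_pos hc1, dif_pos hc2] at hcc
            exact Fin.ext (by simpa using congrArg Fin.val (hinj i hcc))
          · simp only [htdef, dif_pos hc1, dif_neg hc2] at hcc
            exact absurd (Finset.mem_image.mpr ⟨⟨c, hc1⟩, Finset.mem_univ _, hcc⟩) hnot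
          · simp only [htdef, dif_neg hc1, dif_pos hc2] at hcc
            exact absurd (Finset.mem_image.mpr ⟨⟨c', hc2⟩, Finset.mem_univ _, hcc.symm⟩) hnot
          · have := c.isLt
            have := c'.isLt
            exact Fin.ext (by omega)
      rw [hL, key]
      constructor
      · rintro ⟨ha, hb⟩
        exact ⟨fun i => (hRinj i).mpr (ha i), fun i i' => (hRimg i i').mpr (hb i i')⟩
      · rintro ⟨ha, hb⟩
        exact ⟨fun i => (hRinj i).mp (ha i), fun i i' => (hRimg i i').mp (hb i i')⟩
    · -- degenerate case: first block has a repeated column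
      refine iff_of_false ?_ ?_
      · intro hne
        apply hne
        have hz : (Matrix.vandermonde fun b => α (s i0 b)).det = 0 := by
          by_contra hz
          exact hinj0 ((hcomp _).mp (Matrix.det_vandermonde_ne_zero_iff.mp hz))
        simp only [P, _root_.map_mul, h1, hz, zero_mul]
      · rintro ⟨h2, -⟩
        exact hinj0 ((hRinj i0).mp (h2 i0))
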